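/- Let G be a finite simple graph and let v be a vertex of G. If the graph G ∖ v (the induced subgraph on V(G) ∖ {v}) admits a CS-separator of size f₁ and the induced subgraph G ∖ N[v] on the anti-neighborhood V(G) ∖ N[v] of v admits a CS-separator of size f₂, then G admits a CS-separator of size at most f₁ + f₂. -/

import Mathlib

open SimpleGraph

variable {V : Type*}

/-- `S` is a stable set (independent set) of `G`. -/
def IsStableSet (G : SimpleGraph V) (S : Set V) : Prop :=
  S.Pairwise fun u v => ¬ G.Adj u v

/-- `𝒞` is a Clique-Stable set separator (CS-separator) for the induced subgraph `G[A]`: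
a family of subsets of `A` such that for every clique `K ⊆ A` and every stable set `S ⊆ A`
of `G` with `K ∩ S = ∅`, some `W ∈ 𝒞` satisfies `K ⊆ W` and `S ⊆ A ∖ W`. -/
def IsCSSeparatorOn (G : SimpleGraph V) (A : Set V) (𝒞 : Finset (Finset V)) : Prop :=
  (∀ W ∈ 𝒞, (W : Set V) ⊆ A) ∧
  ∀ K S : Finset V, (K : Set V) ⊆ A → (S : Set V) ⊆ A →
    G.IsClique (K : Set V) → IsStableSet G (S : Set V) → Disjoint K S →
    ∃ W ∈ 𝒞, K ⊆ W ∧ Disjoint S W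

/-- The induced subgraph `G[A]` admits a CS-separator of size at most `f`. -/
def HasCSSepOn (G : SimpleGraph V) (A : Set V) (f : ℕ) : Prop :=
  ∃ 𝒞 : Finset (Finset V), 𝒞.card ≤ f ∧ IsCSSeparatorOn G A 𝒞

/-- anti-neighborhood decomposition is valid.  Here
`insert v (G.neighborSet v)` is the closed neighborhood `N[v]`, so its complement
is the anti-neighborhood of `v`. -/
theorem stmt_5 [Finite V] (G : SimpleGraph V) (v : V) (f₁ f₂ : ℕ)
    (h₁ : HasCSSepOn G ({v}ᶜ) f₁)
    (h₂ : HasCSSepOn G ((insert v (G.neighborSet v))ᶜ) f₂) :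
    HasCSSepOn G Set.univ (f₁ + f₂) := by
  classical
  have := Fintype.ofFinite V
  obtain ⟨C₁, hc₁, hA₁, hsep₁⟩ := h₁
  obtain ⟨C₂, hc₂, hA₂, hsep₂⟩ := h₂
  set N : Finset V := G.neighborFinset v with hN
  refine ⟨C₁.image (fun W => insert v W) ∪ C₂.image (fun W => W ∪ N), ?_, ?_, ?_⟩
  · calc _ ≤ (C₁.image (fun W => insert v W)).card + (C₂.image (fun W => W ∪ N)).card :=
          Finset.card_union_le _ _
      _ ≤ f₁ + f₂ := by
          exact add_le_add ((Finset.card_image_le).trans hc₁) ((Finset.card_image_le).trans hc₂)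
  · intro W _
    simp
  · intro K S _ _ hK hS hKS
    by_cases hvS : v ∈ S
    · -- v ∈ S, so v ∉ K and S ∩ N(v) = ∅
      have hvK : v ∉ K := fun h => (Finset.disjoint_left.mp hKS h) hvS
      have hSN : ∀ x ∈ S, x ≠ v → ¬ G.Adj v x := by
        intro x hx hxv
        exact hS (by exact_mod_cast hvS) (by exact_mod_cast hx) (Ne.symm hxv)
      set K' : Finset V := K.filter (fun x => x ∉ (insert v (G.neighborSet v) : Set V))
        with hK'
      set S' : Finset V := S.erase v with hS'
      have hK'A : (K' : Set V) ⊆ (insert v (G.neighborSet v) : Set V)ᶜ := by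
        intro x hx
        simp only [hK', Finset.coe_filter, Set.mem_setOf_eq] at hx
        exact hx.2
      have hS'A : (S' : Set V) ⊆ (insert v (G.neighborSet v) : Set V)ᶜ := by
        intro x hx
        simp only [hS', Finset.coe_erase, Set.mem_diff, Set.mem_singleton_iff] at hx
        intro hmem
        rcases hmem with h | h
        · exact hx.2 h
        · exact hSN x (by exact_mod_cast hx.1) hx.2 h
      have hK'c : G.IsClique (K' : Set V) := hK.subset (by
        intro x hx
        simp only [hK', Finset.coe_filter, Set.mem_setOf_eq] at hx
        exact_mod_cast hx.1)
      have hS's : IsStableSet G (S' : Set V) := hS.mono (by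
        intro x hx
        simp only [hS', Finset.coe_erase, Set.mem_diff] at hx
        exact_mod_cast hx.1)
      have hdisj' : Disjoint K' S' := by
        refine Finset.disjoint_left.mpr fun x hx hx' => ?_
        exact Finset.disjoint_left.mp hKS (Finset.mem_filter.mp hx).1 (Finset.mem_of_mem_erase hx')
      obtain ⟨W, hW, hKW, hSW⟩ := hsep₂ K' S' hK'A hS'A hK'c hS's hdisj'
      refine ⟨W ∪ N, Finset.mem_union_right _ (Finset.mem_image_of_mem _ hW), ?_, ?_⟩
      · intro x hx
        by_cases hmem : x ∈ (insert v (G.neighborSet v) : Set V)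
        · rcases hmem with h | h
          · exact absurd (h ▸ hx) hvK
          · exact Finset.mem_union_right _ (by simpa [hN] using h)
        · exact Finset.mem_union_left _ (hKW (Finset.mem_filter.mpr ⟨hx, hmem⟩))
      · refine Finset.disjoint_left.mpr fun x hx hx' => ?_
        rcases Finset.mem_union.mp hx' with h | h
        · by_cases hxv : x = v
          · subst hxv
            exact (hA₂ W hW h) (Set.mem_insert _ _)
          · exact Finset.disjoint_left.mp hSW (Finset.mem_erase.mpr ⟨hxv, hx⟩) h
        · have hadj : G.Adj v x := by simpa [hN] using h
          have hxv : x ≠ v := fun he => G.loopless.irrefl v (he ▸ hadj)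
          exact hSN x hx hxv hadj
    · -- v ∉ S : use C₁ with K.erase v and S
      have hKA : ((K.erase v : Finset V) : Set V) ⊆ ({v}ᶜ : Set V) := by
        intro x hx
        simp only [Finset.coe_erase, Set.mem_diff, Set.mem_singleton_iff] at hx
        simpa using hx.2
      have hSA : (S : Set V) ⊆ ({v}ᶜ : Set V) := by
        intro x hx
        simp only [Set.mem_compl_iff, Set.mem_singleton_iff]
        rintro rfl
        exact hvS (by exact_mod_cast hx)
      have hKc : G.IsClique ((K.erase v : Finset V) : Set V) := hK.subset (by
        intro x hx
        simp only [Finset.coe_erase, Set.mem_diff] at hx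
        exact hx.1)
      have hdisj' : Disjoint (K.erase v) S :=
        hKS.mono_left (Finset.erase_subset _ _)
      obtain ⟨W, hW, hKW, hSW⟩ := hsep₁ (K.erase v) S hKA hSA hKc hS hdisj'
      refine ⟨insert v W, Finset.mem_union_left _ (Finset.mem_image_of_mem _ hW), ?_, ?_⟩
      · intro x hx
        by_cases hxv : x = v
        · exact hxv ▸ Finset.mem_insert_self _ _
        · exact Finset.mem_insert_of_mem (hKW (Finset.mem_erase.mpr ⟨hxv, hx⟩))
      · refine Finset.disjoint_left.mpr fun x hx hx' => ?_
        rcases Finset.mem_insert.mp hx' with h | h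
        · exact hvS (h ▸ hx)
        · exact Finset.disjoint_left.mp hSW hx h
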